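/- Let X and Y be Banach spaces, both with the operator Daugavet property. Then the ℓ∞-sum X ⊕∞ Y (the product space with norm ‖(x,y)‖ = max{‖x‖, ‖y‖}) has the operator Daugavet property. -/

import Mathlib

/-- The operator Daugavet property. -/
def ODP (X : Type*) [NormedAddCommGroup X] [NormedSpace ℝ X] : Prop :=
  ∀ (n : ℕ) (x : Fin n → X), (∀ i, ‖x i‖ = 1) →
    ∀ f : X →L[ℝ] ℝ, f ≠ 0 → ∀ α > (0:ℝ), ∀ ε > (0:ℝ),
      ∃ z : X, ‖z‖ ≤ 1 ∧ f z > ‖f‖ - α ∧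
        ∀ x' : X, ‖x'‖ ≤ 1 →
          ∃ T : X →L[ℝ] X, ‖T‖ ≤ 1 + ε ∧ T z = x' ∧ ∀ i, ‖T (x i) - x i‖ < ε

/-- ODP for families of points in the ball (not just the sphere). -/
lemma odpA {X : Type*} [NormedAddCommGroup X] [NormedSpace ℝ X] (hX : ODP X)
    (n : ℕ) (x : Fin n → X) (hx : ∀ i, ‖x i‖ ≤ 1)
    (f : X →L[ℝ] ℝ) (hf : f ≠ 0) {α ε : ℝ} (hα : 0 < α) (hε : 0 < ε) :
    ∃ z : X, ‖z‖ ≤ 1 ∧ f z > ‖f‖ - α ∧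
      ∀ x' : X, ‖x'‖ ≤ 1 →
        ∃ T : X →L[ℝ] X, ‖T‖ ≤ 1 + ε ∧ T z = x' ∧ ∀ i, ‖T (x i) - x i‖ < ε := by
  classical
  obtain ⟨v, hv⟩ : ∃ v : X, f v ≠ 0 := by
    by_contra h
    push_neg at h
    exact hf (ContinuousLinearMap.ext fun v => by simpa using h v)
  have hv0 : v ≠ 0 := fun h => hv (by simp [h])
  set u : X := ‖v‖⁻¹ • v with hu
  have hu1 : ‖u‖ = 1 := by
    rw [hu, norm_smul, norm_inv, norm_norm, inv_mul_cancel₀ (norm_ne_zero_iff.mpr hv0)]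
  set xh : Fin n → X := fun i => if h : x i = 0 then u else ‖x i‖⁻¹ • x i with hxh
  have hxh1 : ∀ i, ‖xh i‖ = 1 := by
    intro i
    by_cases h : x i = 0
    · simp [hxh, h, hu1]
    · simp only [hxh, h, dif_neg, not_false_iff]
      rw [norm_smul, norm_inv, norm_norm, inv_mul_cancel₀ (norm_ne_zero_iff.mpr h)]
  obtain ⟨z, hz1, hz2, hz3⟩ := hX n xh hxh1 f hf α hα ε hε
  refine ⟨z, hz1, hz2, fun x' hx' => ?_⟩
  obtain ⟨T, hT1, hT2, hT3⟩ := hz3 x' hx'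
  refine ⟨T, hT1, hT2, fun i => ?_⟩
  by_cases h : x i = 0
  · simpa [h] using hε
  · have hxhi : xh i = ‖x i‖⁻¹ • x i := by simp [hxh, h]
    have key : T (x i) - x i = ‖x i‖ • (T (xh i) - xh i) := by
      rw [hxhi, smul_sub, map_smul, smul_smul, smul_smul,
        mul_inv_cancel₀ (norm_ne_zero_iff.mpr h), one_smul, one_smul]
    calc ‖T (x i) - x i‖ = ‖x i‖ * ‖T (xh i) - xh i‖ := by
          rw [key, norm_smul, norm_norm]
      _ ≤ 1 * ‖T (xh i) - xh i‖ := by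
          exact mul_le_mul_of_nonneg_right (hx i) (norm_nonneg _)
      _ = ‖T (xh i) - xh i‖ := one_mul _
      _ < ε := hT3 i

/-- ODP-like statement with no functional requirement, allowing trivial spaces. -/
lemma odpB {X : Type*} [NormedAddCommGroup X] [NormedSpace ℝ X] (hX : ODP X)
    (n : ℕ) (x : Fin n → X) (hx : ∀ i, ‖x i‖ ≤ 1) {ε : ℝ} (hε : 0 < ε) :
    ∃ z : X, ‖z‖ ≤ 1 ∧
      ∀ x' : X, ‖x'‖ ≤ 1 →
        ∃ T : X →L[ℝ] X, ‖T‖ ≤ 1 + ε ∧ T z = x' ∧ ∀ i, ‖T (x i) - x i‖ < ε := by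
  by_cases htriv : ∀ v : X, v = 0
  · refine ⟨0, by simp, fun x' _ => ⟨0, ?_, ?_, fun i => ?_⟩⟩
    · simp; linarith
    · simp [htriv x']
    · simp [htriv (x i)]; exact hε
  · push_neg at htriv
    obtain ⟨v, hv⟩ := htriv
    obtain ⟨f, hf1, hf2⟩ := exists_dual_vector ℝ v (norm_ne_zero_iff.mpr hv)
    have hf : f ≠ 0 := by
      intro h
      rw [h] at hf1
      simp at hf1
    obtain ⟨z, hz1, _, hz3⟩ := odpA hX n x hx f hf one_pos hε
    exact ⟨z, hz1, hz3⟩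

/-- Combined: works for any functional (possibly zero). -/
lemma odpC {X : Type*} [NormedAddCommGroup X] [NormedSpace ℝ X] (hX : ODP X)
    (n : ℕ) (x : Fin n → X) (hx : ∀ i, ‖x i‖ ≤ 1)
    (f : X →L[ℝ] ℝ) {α ε : ℝ} (hα : 0 < α) (hε : 0 < ε) :
    ∃ z : X, ‖z‖ ≤ 1 ∧ f z > ‖f‖ - α ∧
      ∀ x' : X, ‖x'‖ ≤ 1 →
        ∃ T : X →L[ℝ] X, ‖T‖ ≤ 1 + ε ∧ T z = x' ∧ ∀ i, ‖T (x i) - x i‖ < ε := by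
  by_cases hf : f = 0
  · obtain ⟨z, hz1, hz3⟩ := odpB hX n x hx hε
    exact ⟨z, hz1, by simp [hf]; linarith, hz3⟩
  · exact odpA hX n x hx f hf hα hε

set_option maxHeartbeats 1000000 in
theorem stmt2 {X Y : Type*} [NormedAddCommGroup X] [NormedSpace ℝ X] [CompleteSpace X]
    [NormedAddCommGroup Y] [NormedSpace ℝ Y] [CompleteSpace Y]
    (hX : ODP X) (hY : ODP Y) : ODP (X × Y) := by
  intro n p hp f hf α hα ε hε
  set f₁ : X →L[ℝ] ℝ := f.comp (ContinuousLinearMap.inl ℝ X Y) with hf₁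
  set f₂ : Y →L[ℝ] ℝ := f.comp (ContinuousLinearMap.inr ℝ X Y) with hf₂
  have hsplit : ∀ (a : X) (b : Y), f (a, b) = f₁ a + f₂ b := by
    intro a b
    have : (a, b) = ((a, 0) : X × Y) + (0, b) := by simp
    rw [this, map_add]
    simp [hf₁, hf₂]
  have hnorm : ‖f‖ ≤ ‖f₁‖ + ‖f₂‖ := by
    refine f.opNorm_le_bound (by positivity) fun q => ?_
    have h1 : ‖q.1‖ ≤ ‖q‖ := norm_fst_le q
    have h2 : ‖q.2‖ ≤ ‖q‖ := norm_snd_le q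
    calc ‖f q‖ = ‖f₁ q.1 + f₂ q.2‖ := by rw [← hsplit q.1 q.2]
      _ ≤ ‖f₁ q.1‖ + ‖f₂ q.2‖ := norm_add_le _ _
      _ ≤ ‖f₁‖ * ‖q.1‖ + ‖f₂‖ * ‖q.2‖ :=
          add_le_add (f₁.le_opNorm _) (f₂.le_opNorm _)
      _ ≤ ‖f₁‖ * ‖q‖ + ‖f₂‖ * ‖q‖ :=
          add_le_add (mul_le_mul_of_nonneg_left h1 (norm_nonneg _))
            (mul_le_mul_of_nonneg_left h2 (norm_nonneg _))
      _ = (‖f₁‖ + ‖f₂‖) * ‖q‖ := by ring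
  have hx : ∀ i, ‖(p i).1‖ ≤ 1 := fun i => (norm_fst_le (p i)).trans_eq (hp i)
  have hy : ∀ i, ‖(p i).2‖ ≤ 1 := fun i => (norm_snd_le (p i)).trans_eq (hp i)
  obtain ⟨z₁, hz₁1, hz₁2, hz₁3⟩ := odpC hX n (fun i => (p i).1) hx f₁ (half_pos hα) hε
  obtain ⟨z₂, hz₂1, hz₂2, hz₂3⟩ := odpC hY n (fun i => (p i).2) hy f₂ (half_pos hα) hε
  refine ⟨(z₁, z₂), ?_, ?_, ?_⟩
  · rw [Prod.norm_def]
    exact max_le hz₁1 hz₂1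
  · calc f (z₁, z₂) = f₁ z₁ + f₂ z₂ := hsplit z₁ z₂
      _ > (‖f₁‖ - α / 2) + (‖f₂‖ - α / 2) := by gcongr
      _ = ‖f₁‖ + ‖f₂‖ - α := by ring
      _ ≥ ‖f‖ - α := by linarith
  · rintro ⟨x', y'⟩ hxy
    rw [Prod.norm_def] at hxy
    obtain ⟨T₁, hT₁1, hT₁2, hT₁3⟩ := hz₁3 x' (le_trans (le_max_left _ _) hxy)
    obtain ⟨T₂, hT₂1, hT₂2, hT₂3⟩ := hz₂3 y' (le_trans (le_max_right _ _) hxy)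
    have happly : ∀ q : X × Y, (T₁.prodMap T₂) q = (T₁ q.1, T₂ q.2) := by
      intro q
      rw [ContinuousLinearMap.coe_prodMap']
      rfl
    refine ⟨T₁.prodMap T₂, ?_, ?_, fun i => ?_⟩
    · refine ContinuousLinearMap.opNorm_le_bound _ (by linarith) fun q => ?_
      rw [happly, Prod.norm_def, Prod.norm_def]
      refine max_le ?_ ?_
      · calc ‖T₁ q.1‖ ≤ ‖T₁‖ * ‖q.1‖ := T₁.le_opNorm _
          _ ≤ (1 + ε) * (‖q.1‖ ⊔ ‖q.2‖) := by
              have := le_max_left ‖q.1‖ ‖q.2‖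
              nlinarith [norm_nonneg q.1, norm_nonneg q.2]
      · calc ‖T₂ q.2‖ ≤ ‖T₂‖ * ‖q.2‖ := T₂.le_opNorm _
          _ ≤ (1 + ε) * (‖q.1‖ ⊔ ‖q.2‖) := by
              have := le_max_right ‖q.1‖ ‖q.2‖
              nlinarith [norm_nonneg q.1, norm_nonneg q.2]
    · rw [happly]
      simp only []
      rw [hT₁2, hT₂2]
    · have : (T₁.prodMap T₂) (p i) - p i = (T₁ (p i).1 - (p i).1, T₂ (p i).2 - (p i).2) := by
        rw [happly, Prod.mk_sub_mk]
      rw [this, Prod.norm_def]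
      exact max_lt (hT₁3 i) (hT₂3 i)
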